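/- Let Z be a proper geodesic δ-hyperbolic metric space, K ≥ 1, and {xₙ}, {yₙ} sequences in Z with lim xₙ = lim yₙ = ξ ∈ ∂Z. Suppose for each n, xₙ is joined to x₁ by a K-quasi-geodesic αₙ and yₙ is joined to y₁ by a K-quasi-geodesic βₙ. Then there is a constant D depending only on δ, d(x₁, y₁) and K, a subsequence {n_k}, and points p_{n_k} ∈ α_{n_k}, q_{n_k} ∈ β_{n_k} such that d(p_{n_k}, q_{n_k}) ≤ D and lim_{k→∞} p_{n_k} = lim_{k→∞} q_{n_k} = ξ. -/

import Mathlib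

/-!
Framework for proper geodesic Gromov hyperbolic metric spaces: geodesic
segments and rays, the Gromov boundary as equivalence classes of geodesic rays
from a basepoint (two rays being equivalent when they are at finite Hausdorff
distance), convergence of sequences to boundary points via uniform-on-compact
subconvergence of geodesics, and limit sets.
-/

noncomputable section

open Filter

namespace LIP

variable {Z : Type} [MetricSpace Z]

/-- The Gromov product `(x|y)_w`. -/
def gromovProd (x y w : Z) : ℝ := (dist x w + dist y w - dist x y) / 2

/-- Gromov's four-point condition: the space is `δ`-hyperbolic. -/
def DeltaHypSpace (Z : Type) [MetricSpace Z] (δ : ℝ) : Prop :=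
  ∀ x y z w : Z, min (gromovProd x y w) (gromovProd y z w) ≤ gromovProd x z w + δ

/-- `γ : ℝ → Z` is a geodesic from `b` to `y`, parametrised by arc length on
`[0, dist b y]` and extended constantly beyond `dist b y`. -/
def IsGeodSegTo (b y : Z) (γ : ℝ → Z) : Prop :=
  γ 0 = b ∧ (∀ t, dist b y ≤ t → γ t = y) ∧
    ∀ s t, 0 ≤ s → s ≤ dist b y → 0 ≤ t → t ≤ dist b y → dist (γ s) (γ t) = |s - t|

/-- A geodesic metric space: any two points are joined by a geodesic. -/
def IsGeodesicSpace (Z : Type) [MetricSpace Z] : Prop :=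
  ∀ x y : Z, ∃ γ : ℝ → Z, IsGeodSegTo x y γ

/-- A geodesic ray starting at `b` (only the values on `[0, ∞)` are relevant). -/
def IsRayFrom (b : Z) (ρ : ℝ → Z) : Prop :=
  ρ 0 = b ∧ ∀ s t : ℝ, 0 ≤ s → 0 ≤ t → dist (ρ s) (ρ t) = |s - t|

/-- The geodesic rays emanating from the basepoint `b`. -/
def RaysFrom (b : Z) := {ρ : ℝ → Z // IsRayFrom b ρ}

/-- Two rays are identified when they are at finite Hausdorff distance. -/
def rayClose (ρ₁ ρ₂ : ℝ → Z) : Prop :=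
  EMetric.hausdorffEdist (ρ₁ '' Set.Ici 0) (ρ₂ '' Set.Ici 0) ≠ ⊤

/-- The Gromov boundary of `Z` with respect to the basepoint `b`: equivalence classes
of geodesic rays from `b`, two rays being equivalent when they are at finite Hausdorff
distance. -/
def RBdry (b : Z) := Quot (fun ρ₁ ρ₂ : RaysFrom b => rayClose ρ₁.1 ρ₂.1)

/-- The class of the ray `ρ` as a boundary point, `ρ(∞)`. -/
def rayPt {b : Z} (ρ : RaysFrom b) : RBdry b := Quot.mk _ ρ

/-- Uniform convergence on compact subsets of `[0, ∞)` for a sequence of paths. -/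
def UCC (γ : ℕ → ℝ → Z) (α : ℝ → Z) : Prop :=
  ∀ M ε : ℝ, 0 < ε → ∃ N : ℕ, ∀ n ≥ N, ∀ t : ℝ, 0 ≤ t → t ≤ M → dist (γ n t) (α t) ≤ ε

/-- The sequence `u` converges to the boundary point `ξ ∈ ∂Z`: for any choice of
geodesics `γ n` from the basepoint `b` to `u n`, every subsequence has a further
subsequence converging uniformly on compact sets to a geodesic ray in the class `ξ`. -/
def SeqConvTo (b : Z) (u : ℕ → Z) (ξ : RBdry b) : Prop :=
  ∀ γ : ℕ → ℝ → Z, (∀ n, IsGeodSegTo b (u n) (γ n)) →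
    ∀ φ : ℕ → ℕ, StrictMono φ →
      ∃ ψ : ℕ → ℕ, StrictMono ψ ∧ ∃ ρ : RaysFrom b,
        UCC (fun k => γ (φ (ψ k))) ρ.1 ∧ rayPt ρ = ξ

/-- The limit set of a subset `A ⊆ Z` in `∂Z`. -/
def rLimitSet (b : Z) (A : Set Z) : Set (RBdry b) :=
  {ξ | ∃ u : ℕ → Z, (∀ n, u n ∈ A) ∧ SeqConvTo b u ξ}

/-- A ray `α` (not necessarily based at `b`) joins its origin to the boundary point
`ξ ∈ ∂Z` if it is at finite Hausdorff distance from some (hence any) ray in the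
class `ξ`. -/
def RayToBdryPt {b : Z} (α : ℝ → Z) (ξ : RBdry b) : Prop :=
  ∃ ρ : RaysFrom b, rayPt ρ = ξ ∧ rayClose α ρ.1

/-- Convergence of a sequence of boundary points: some representing rays converge
uniformly on compact sets. -/
def RBdConv {b : Z} (ξs : ℕ → RBdry b) (ξ : RBdry b) : Prop :=
  ∃ (ρs : ℕ → RaysFrom b) (ρ : RaysFrom b),
    (∀ n, rayPt (ρs n) = ξs n) ∧ rayPt ρ = ξ ∧ UCC (fun n => (ρs n).1) ρ.1

end LIP

namespace LIP

/-- A `K`-quasi-geodesic from `x` to `y`, defined on `[0, L]`. -/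
def IsQGeodSeg {Z : Type} [MetricSpace Z] (K : ℝ) (x y : Z) (L : ℝ) (γ : ℝ → Z) : Prop :=
  0 ≤ L ∧ γ 0 = x ∧ γ L = y ∧
    ∀ s t : ℝ, s ∈ Set.Icc 0 L → t ∈ Set.Icc 0 L →
      (1 / K) * |s - t| - K ≤ dist (γ s) (γ t) ∧ dist (γ s) (γ t) ≤ K * |s - t| + K


section Aux

open Topology

variable {Z : Type} [MetricSpace Z]

lemma IsGeodSegTo.last {b y : Z} {γ : ℝ → Z} (h : IsGeodSegTo b y γ) : γ (dist b y) = y :=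
  h.2.1 _ le_rfl

lemma IsGeodSegTo.dist_base {b y : Z} {γ : ℝ → Z} (h : IsGeodSegTo b y γ) {t : ℝ}
    (h0 : 0 ≤ t) (h1 : t ≤ dist b y) : dist b (γ t) = t := by
  have h2 := h.2.2 0 t le_rfl dist_nonneg h0 h1
  rw [h.1] at h2
  rw [h2, zero_sub, abs_neg, abs_of_nonneg h0]

lemma IsGeodSegTo.dist_last {b y : Z} {γ : ℝ → Z} (h : IsGeodSegTo b y γ) {t : ℝ}
    (h0 : 0 ≤ t) (h1 : t ≤ dist b y) : dist (γ t) y = dist b y - t := by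
  have h2 := h.2.2 t (dist b y) h0 h1 dist_nonneg le_rfl
  rw [h.last] at h2
  rw [h2, abs_of_nonpos (by linarith)]
  ring

lemma IsGeodSegTo.lip {b y : Z} {γ : ℝ → Z} (h : IsGeodSegTo b y γ) {s t : ℝ}
    (hs : 0 ≤ s) (ht : 0 ≤ t) : dist (γ s) (γ t) ≤ |s - t| := by
  wlog hst : s ≤ t generalizing s t
  · rw [dist_comm, abs_sub_comm]; exact this ht hs (le_of_not_ge hst)
  rcases le_or_gt t (dist b y) with h1 | h1
  · rw [h.2.2 s t hs (hst.trans h1) ht h1]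
  rcases le_or_gt s (dist b y) with h2 | h2
  · rw [h.2.1 t h1.le]
    have h3 := h.dist_last hs h2
    rw [h3, abs_sub_comm, abs_of_nonneg (by linarith)]
    linarith
  · rw [h.2.1 t h1.le, h.2.1 s h2.le, dist_self]
    exact abs_nonneg _

lemma gromovProd_comm (x y w : Z) : gromovProd x y w = gromovProd y x w := by
  unfold gromovProd; rw [dist_comm x y]; ring

lemma exists_near_geod {δ : ℝ} (hyp : DeltaHypSpace Z δ) {x z : Z} {γ : ℝ → Z}
    (hγ : IsGeodSegTo x z γ) (w : Z) :
    ∃ r, 0 ≤ r ∧ r ≤ dist x z ∧ dist w (γ r) ≤ gromovProd x z w + 2 * δ := by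
  have t1 : dist w z ≤ dist w x + dist x z := dist_triangle _ _ _
  have t2 : dist x w ≤ dist x z + dist z w := dist_triangle _ _ _
  have e1 : dist x w = dist w x := dist_comm _ _
  have e2 : dist z w = dist w z := dist_comm _ _
  set r := (dist x w + dist x z - dist w z) / 2 with hr
  have hr0 : 0 ≤ r := by rw [hr]; linarith
  have hr1 : r ≤ dist x z := by rw [hr]; linarith
  have hm1 : dist x (γ r) = r := hγ.dist_base hr0 hr1
  have hm2 : dist (γ r) z = dist x z - r := hγ.dist_last hr0 hr1
  have h4 := hyp x (γ r) z w
  unfold gromovProd at h4 ⊢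
  have e3 : dist (γ r) w = dist w (γ r) := dist_comm _ _
  refine ⟨r, hr0, hr1, ?_⟩
  have hAB : (dist x w + dist (γ r) w - dist x (γ r)) / 2
      = (dist (γ r) w + dist z w - dist (γ r) z) / 2 := by
    rw [hm1, hm2, hr]; ring_nf; linarith
  rw [hAB, min_self, hm2] at h4
  linarith

lemma slim_triangle {δ : ℝ} (hyp : DeltaHypSpace Z δ) {x y z w : Z}
    (hw : dist x w + dist w y = dist x y)
    {γ₁ γ₂ : ℝ → Z} (h₁ : IsGeodSegTo x z γ₁) (h₂ : IsGeodSegTo y z γ₂) :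
    (∃ r, 0 ≤ r ∧ r ≤ dist x z ∧ dist w (γ₁ r) ≤ 3 * δ) ∨
    (∃ r, 0 ≤ r ∧ r ≤ dist y z ∧ dist w (γ₂ r) ≤ 3 * δ) := by
  have hxy : gromovProd x y w = 0 := by
    unfold gromovProd
    have : dist w y = dist y w := dist_comm _ _
    linarith
  have h4 := hyp x z y w
  rw [hxy, zero_add] at h4
  rcases min_le_iff.mp h4 with hc | hc
  · left
    obtain ⟨r, hr0, hr1, hb⟩ := exists_near_geod hyp h₁ w
    exact ⟨r, hr0, hr1, by linarith⟩
  · right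
    obtain ⟨r, hr0, hr1, hb⟩ := exists_near_geod hyp h₂ w
    rw [gromovProd_comm] at hc
    exact ⟨r, hr0, hr1, by linarith⟩

/-- A coarse chain with steps of size at most `c` from `x` to `y`. -/
def IsChain (c : ℝ) (Γ : ℕ → Z) (N : ℕ) (x y : Z) : Prop :=
  Γ 0 = x ∧ Γ N = y ∧ ∀ j < N, dist (Γ j) (Γ (j + 1)) ≤ c

lemma IsChain.concat {c : ℝ} {Γ₁ Γ₂ : ℕ → Z} {N₁ N₂ : ℕ} {x m y : Z}
    (h₁ : IsChain c Γ₁ N₁ x m) (h₂ : IsChain c Γ₂ N₂ m y) :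
    ∃ Γ, IsChain c Γ (N₁ + N₂) x y ∧
      ∀ j ≤ N₁ + N₂, (∃ j₁ ≤ N₁, Γ j = Γ₁ j₁) ∨ (∃ j₂ ≤ N₂, Γ j = Γ₂ j₂) := by
  refine ⟨fun j => if j ≤ N₁ then Γ₁ j else Γ₂ (j - N₁), ⟨?_, ?_, ?_⟩, ?_⟩
  · show (if 0 ≤ N₁ then Γ₁ 0 else Γ₂ (0 - N₁)) = x
    rw [if_pos (Nat.zero_le _)]; exact h₁.1
  · show (if N₁ + N₂ ≤ N₁ then Γ₁ (N₁ + N₂) else Γ₂ (N₁ + N₂ - N₁)) = y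
    by_cases h : N₁ + N₂ ≤ N₁
    · have hN2 : N₂ = 0 := by omega
      subst hN2
      rw [if_pos h]
      have hmy : m = y := h₂.1.symm.trans h₂.2.1
      rw [Nat.add_zero, h₁.2.1, hmy]
    · rw [if_neg h, Nat.add_sub_cancel_left]; exact h₂.2.1
  · intro j hj
    show dist (if j ≤ N₁ then Γ₁ j else Γ₂ (j - N₁)) (if j + 1 ≤ N₁ then Γ₁ (j + 1) else Γ₂ (j + 1 - N₁)) ≤ c
    by_cases hj1 : j + 1 ≤ N₁
    · rw [if_pos (by omega : j ≤ N₁), if_pos hj1]; exact h₁.2.2 j (by omega)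
    · by_cases hj0 : j ≤ N₁
      · have hje : j = N₁ := by omega
        subst hje
        rw [if_pos le_rfl, if_neg hj1]
        have h1 : j + 1 - j = 1 := by omega
        rw [h1, h₁.2.1, ← h₂.1]
        exact h₂.2.2 0 (by omega)
      · rw [if_neg hj0, if_neg (by omega : ¬ (j + 1 ≤ N₁))]
        have h1 : j + 1 - N₁ = (j - N₁) + 1 := by omega
        rw [h1]
        exact h₂.2.2 (j - N₁) (by omega)
  · intro j _
    by_cases h : j ≤ N₁
    · exact Or.inl ⟨j, h, by simp only [if_pos h]⟩
    · exact Or.inr ⟨j - N₁, by omega, by simp only [if_neg h]⟩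

lemma IsChain.rev {c : ℝ} {Γ : ℕ → Z} {N : ℕ} {x y : Z} (h : IsChain c Γ N x y) :
    IsChain c (fun j => Γ (N - j)) N y x := by
  refine ⟨by simp only [Nat.sub_zero]; exact h.2.1, by simp only [Nat.sub_self]; exact h.1, ?_⟩
  intro j hj
  have h1 : N - j = (N - (j + 1)) + 1 := by omega
  simp only
  rw [h1, dist_comm]
  exact h.2.2 (N - (j + 1)) (by omega)

lemma sample_chain {p q : Z} {g : ℝ → Z} (hg : IsGeodSegTo p q g) {c : ℝ} (hc : 0 < c) :
    IsChain c (fun j => g (min (j * c) (dist p q))) ⌈dist p q / c⌉₊ p q ∧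
      ∀ j : ℕ, ∃ u, 0 ≤ u ∧ u ≤ dist p q ∧ g (min ((j : ℝ) * c) (dist p q)) = g u := by
  have hd0 : (0:ℝ) ≤ dist p q := dist_nonneg
  constructor
  · refine ⟨?_, ?_, ?_⟩
    · simp only [Nat.cast_zero, zero_mul, min_eq_left hd0]
      exact hg.1
    · have h1 : dist p q ≤ (⌈dist p q / c⌉₊ : ℝ) * c := by
        rw [← div_le_iff₀ hc]; exact Nat.le_ceil _
      simp only [min_eq_right h1]
      exact hg.last
    · intro j _
      have h1 : (0:ℝ) ≤ (j:ℝ) * c := by positivity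
      have h2 : (0:ℝ) ≤ ((j:ℝ) + 1) * c := by positivity
      have key : ∀ u v : ℝ, 0 ≤ u → 0 ≤ v →
          dist (g (min u (dist p q))) (g (min v (dist p q))) = |min u (dist p q) - min v (dist p q)| :=
        fun u v hu hv => hg.2.2 _ _ (le_min hu hd0) (min_le_right _ _) (le_min hv hd0) (min_le_right _ _)
      have hcast : ((j + 1 : ℕ) : ℝ) = (j : ℝ) + 1 := by push_cast; ring
      simp only [hcast]
      rw [key _ _ h1 h2]
      rcases le_total (((j:ℝ) + 1) * c) (dist p q) with h | h
      · rw [min_eq_left (by nlinarith), min_eq_left h, abs_of_nonpos (by nlinarith)]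
        nlinarith
      · rw [min_eq_right h]
        rcases le_total ((j:ℝ) * c) (dist p q) with h' | h'
        · rw [min_eq_left h', abs_of_nonpos (by linarith)]
          nlinarith
        · rw [min_eq_right h', sub_self, abs_zero]; linarith
  · intro j
    exact ⟨min ((j:ℝ) * c) (dist p q), le_min (by positivity) hd0, min_le_right _ _, rfl⟩

lemma z_chain {c : ℝ} {z : ℕ → Z} (hstep : ∀ i : ℕ, dist (z i) (z (i + 1)) ≤ c)
    (i₁ i₂ : ℕ) :
    ∃ Γ, IsChain c Γ (Nat.dist i₁ i₂) (z i₁) (z i₂) ∧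
      ∀ j ≤ Nat.dist i₁ i₂, ∃ i, i ≤ max i₁ i₂ ∧ Γ j = z i := by
  rcases le_total i₁ i₂ with h | h
  · refine ⟨fun j => z (i₁ + j), ⟨by simp, ?_, ?_⟩, ?_⟩
    · rw [Nat.dist_eq_sub_of_le h]
      exact congrArg z (by omega)
    · intro j _
      exact hstep (i₁ + j)
    · intro j hj
      rw [Nat.dist_eq_sub_of_le h] at hj
      exact ⟨i₁ + j, by omega, rfl⟩
  · refine ⟨fun j => z (i₁ - j), ⟨by simp, ?_, ?_⟩, ?_⟩
    · rw [Nat.dist_eq_sub_of_le_right h]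
      exact congrArg z (by omega)
    · intro j hj
      rw [Nat.dist_eq_sub_of_le_right h] at hj
      have h1 : i₁ - j = (i₁ - (j + 1)) + 1 := by omega
      simp only
      rw [h1, dist_comm]
      exact hstep _
    · intro j _
      exact ⟨i₁ - j, by omega, rfl⟩

lemma chain_near_between {δ : ℝ} (hδ : 0 ≤ δ) (hyp : DeltaHypSpace Z δ)
    (hgeo : IsGeodesicSpace Z) {c : ℝ} (hc : 0 ≤ c) :
    ∀ (k N : ℕ), N ≤ 2 ^ k → ∀ (Γ : ℕ → Z) (x y w : Z), IsChain c Γ N x y →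
      dist x w + dist w y = dist x y →
      ∃ j ≤ N, dist w (Γ j) ≤ 3 * δ * k + c := by
  intro k
  induction k with
  | zero =>
    intro N hN Γ x y w hΓ hw
    simp only [pow_zero] at hN
    interval_cases N
    · have hxy : x = y := hΓ.1.symm.trans hΓ.2.1
      refine ⟨0, le_rfl, ?_⟩
      have h1 : dist x y = 0 := by rw [hxy, dist_self]
      have h2 : dist w (Γ 0) = dist x w := by rw [hΓ.1, dist_comm]
      have h3 : (0:ℝ) ≤ dist w y := dist_nonneg
      simp only [Nat.cast_zero, mul_zero, zero_add]
      linarith [dist_nonneg (x := x) (y := w)]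
    · refine ⟨0, by omega, ?_⟩
      have hstep := hΓ.2.2 0 (by omega)
      rw [hΓ.1] at hstep
      have h2 : Γ 1 = y := hΓ.2.1
      rw [h2] at hstep
      have h3 : (0:ℝ) ≤ dist w y := dist_nonneg
      have h4 : dist w (Γ 0) = dist x w := by rw [hΓ.1, dist_comm]
      simp only [Nat.cast_zero, mul_zero, zero_add]
      linarith
  | succ k ih =>
    intro N hN Γ x y w hΓ hw
    rcases le_or_gt N (2 ^ k) with hN' | hN'
    · obtain ⟨j, hj, hb⟩ := ih N hN' Γ x y w hΓ hw
      refine ⟨j, hj, hb.trans ?_⟩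
      have : (k:ℝ) ≤ (k:ℝ) + 1 := by linarith
      push_cast
      nlinarith
    · have hh : 2 ^ k ≤ N := hN'.le
      obtain ⟨γ₁, hγ₁⟩ := hgeo x (Γ (2 ^ k))
      obtain ⟨γ₂, hγ₂⟩ := hgeo y (Γ (2 ^ k))
      rcases slim_triangle hyp hw hγ₁ hγ₂ with ⟨r, hr0, hr1, hb⟩ | ⟨r, hr0, hr1, hb⟩
      · have hbet : dist x (γ₁ r) + dist (γ₁ r) (Γ (2 ^ k)) = dist x (Γ (2 ^ k)) := by
          rw [hγ₁.dist_base hr0 hr1, hγ₁.dist_last hr0 hr1]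
          ring
        have hchain : IsChain c Γ (2 ^ k) x (Γ (2 ^ k)) :=
          ⟨hΓ.1, rfl, fun j hj => hΓ.2.2 j (lt_of_lt_of_le hj hh)⟩
        obtain ⟨j, hj, hb2⟩ := ih (2 ^ k) le_rfl Γ x (Γ (2 ^ k)) (γ₁ r) hchain hbet
        refine ⟨j, hj.trans hh, ?_⟩
        have htri : dist w (Γ j) ≤ dist w (γ₁ r) + dist (γ₁ r) (Γ j) := dist_triangle _ _ _
        have hcomm : dist (γ₁ r) (Γ j) = dist (Γ j) (γ₁ r) := dist_comm _ _
        have hb2' : dist (γ₁ r) (Γ j) ≤ 3 * δ * k + c := by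
          rw [dist_comm]; rw [dist_comm] at hb2; exact hb2
        push_cast
        linarith
      · have key : N - 2 ^ k ≤ 2 ^ k := by
          have h2 : 2 ^ (k + 1) = 2 ^ k + 2 ^ k := by rw [pow_succ]; ring
          omega
        have hbet : dist y (γ₂ r) + dist (γ₂ r) (Γ (2 ^ k)) = dist y (Γ (2 ^ k)) := by
          rw [hγ₂.dist_base hr0 hr1, hγ₂.dist_last hr0 hr1]
          ring
        have hchain : IsChain c (fun j => Γ (N - j)) (N - 2 ^ k) y (Γ (2 ^ k)) := by
          refine ⟨by simp only [Nat.sub_zero]; exact hΓ.2.1, ?_, ?_⟩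
          · simp only
            exact congrArg Γ (by omega)
          · intro j hj
            have h1 : N - j = (N - (j + 1)) + 1 := by omega
            simp only
            rw [h1, dist_comm]
            exact hΓ.2.2 (N - (j + 1)) (by omega)
        obtain ⟨j, hj, hb2⟩ := ih (N - 2 ^ k) key _ y (Γ (2 ^ k)) (γ₂ r) hchain hbet
        refine ⟨N - j, by omega, ?_⟩
        have htri : dist w (Γ (N - j)) ≤ dist w (γ₂ r) + dist (γ₂ r) (Γ (N - j)) := dist_triangle _ _ _
        have hb2' : dist (γ₂ r) (Γ (N - j)) ≤ 3 * δ * k + c := by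
          rw [dist_comm]; rw [dist_comm] at hb2; exact hb2
        push_cast
        linarith

/-- The Morse-type stability constant. -/
def R₀ (δ K : ℝ) : ℝ :=
  (K ^ 2 + 3) / (6 * K + 2) +
    2 * (3 * δ / Real.log 2 + 1) * Real.log (2 * (3 * δ / Real.log 2 + 1) * (6 * K + 2)) +
    6 * δ + 4 * K

set_option maxHeartbeats 1000000 in
lemma R₀_props {δ K : ℝ} (hδ : 0 ≤ δ) (hK : 1 ≤ K) :
    3 * δ + 2 * K ≤ R₀ δ K ∧ 0 ≤ R₀ δ K := by
  have hlog2 : (0:ℝ) < Real.log 2 := Real.log_pos one_lt_two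
  have hE : 0 ≤ 3 * δ / Real.log 2 := by positivity
  have hM1 : (1:ℝ) ≤ 2 * (3 * δ / Real.log 2 + 1) * (6 * K + 2) := by nlinarith
  have hlogM : 0 ≤ Real.log (2 * (3 * δ / Real.log 2 + 1) * (6 * K + 2)) :=
    Real.log_nonneg hM1
  have h1 : 0 ≤ (K ^ 2 + 3) / (6 * K + 2) := by positivity
  constructor
  · unfold R₀; nlinarith
  · unfold R₀; nlinarith

set_option maxHeartbeats 1000000 in
lemma resolve_log_bound {δ K D₀ : ℝ} (hδ : 0 ≤ δ) (hK : 1 ≤ K) (hD₀ : 0 ≤ D₀) {n : ℕ}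
    (h1 : D₀ ≤ 3 * δ * ((Nat.log 2 n : ℝ) + 1) + 2 * K)
    (h2 : (n : ℝ) ≤ (6 * K + 2) * D₀ + (K ^ 2 + 3)) :
    D₀ ≤ R₀ δ K := by
  have hlog2 : (0:ℝ) < Real.log 2 := Real.log_pos one_lt_two
  rcases Nat.eq_zero_or_pos n with hn0 | hn0
  · subst hn0
    rw [Nat.log_zero_right] at h1
    norm_num at h1
    exact h1.trans (R₀_props hδ hK).1
  set l := Nat.log 2 n with hl
  have hpow : (2:ℝ) ^ l ≤ (n:ℝ) := by
    exact_mod_cast Nat.pow_log_le_self 2 (by omega)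
  have hllog : (l:ℝ) * Real.log 2 ≤ Real.log n := by
    rw [← Real.log_pow]
    exact Real.log_le_log (by positivity) hpow
  set E := 3 * δ / Real.log 2 with hE
  have hE0 : 0 ≤ E := by positivity
  have hEl : 3 * δ * (l:ℝ) ≤ E * Real.log n := by
    have heq : E * ((l:ℝ) * Real.log 2) = 3 * δ * l := by
      rw [hE]
      field_simp
    nlinarith [mul_le_mul_of_nonneg_left hllog hE0]
  have hstep1 : D₀ ≤ E * Real.log n + 3 * δ + 2 * K := by nlinarith
  set A := 6 * K + 2 with hA
  set B := K ^ 2 + 3 with hB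
  have hA8 : (8:ℝ) ≤ A := by rw [hA]; linarith
  have hB4 : (4:ℝ) ≤ B := by rw [hB]; nlinarith
  have hABpos : (0:ℝ) < A * D₀ + B := by nlinarith
  have hn1 : (1:ℝ) ≤ (n:ℝ) := by exact_mod_cast hn0
  have hlogn : Real.log n ≤ Real.log (A * D₀ + B) := Real.log_le_log (by linarith) h2
  have hlogn0 : 0 ≤ Real.log (A * D₀ + B) := Real.log_nonneg (by nlinarith)
  set M := 2 * (E + 1) * A with hM
  have hMpos : (0:ℝ) < M := by nlinarith
  have hM1 : (1:ℝ) ≤ M := by nlinarith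
  have hlogM0 : 0 ≤ Real.log M := Real.log_nonneg hM1
  have hkey : Real.log (A * D₀ + B) ≤ (A * D₀ + B) / M + Real.log M := by
    have hq := Real.log_le_sub_one_of_pos (x := (A * D₀ + B) / M) (by positivity)
    have hdiv : Real.log ((A * D₀ + B) / M) = Real.log (A * D₀ + B) - Real.log M :=
      Real.log_div (by positivity) (by positivity)
    rw [hdiv] at hq
    linarith
  have hMsimp : (E + 1) * ((A * D₀ + B) / M) = D₀ / 2 + B / (2 * A) := by
    have hE1 : E + 1 ≠ 0 := by positivity
    have hA0 : A ≠ 0 := by intro h; rw [h] at hA8; norm_num at hA8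
    have key : M = (E + 1) * (2 * A) := by rw [hM]; ring
    rw [key, ← div_div, ← mul_div_assoc]
    have hc : (E + 1) * ((A * D₀ + B) / (E + 1)) = A * D₀ + B := by
      field_simp
    rw [hc]
    rw [div_add_div _ _ (two_ne_zero) (by exact mul_ne_zero two_ne_zero hA0 : (2:ℝ) * A ≠ 0)]
    rw [div_eq_div_iff (by exact mul_ne_zero two_ne_zero hA0 : (2:ℝ) * A ≠ 0) ?_]
    · ring
    · exact mul_ne_zero two_ne_zero (mul_ne_zero two_ne_zero hA0)
  have hEE : E * Real.log (A * D₀ + B) ≤ (E + 1) * Real.log (A * D₀ + B) := by nlinarith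
  have hfin : D₀ ≤ D₀ / 2 + B / (2 * A) + (E + 1) * Real.log M + 3 * δ + 2 * K := by
    have := mul_le_mul_of_nonneg_left hkey (by linarith : (0:ℝ) ≤ E + 1)
    nlinarith
  have hR : R₀ δ K = B / A + 2 * (E + 1) * Real.log M + 6 * δ + 4 * K := by
    unfold R₀
    rw [hM, hE, hA, hB]
  rw [hR]
  have hBA : B / (2 * A) = B / A / 2 := by rw [div_div, mul_comm]
  linarith

set_option maxHeartbeats 3000000 in
/-- Every point of a geodesic is within `R₀ δ K` of (the sampled image of) a
`K`-quasigeodesic with the same endpoints. -/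
lemma geodesic_near_qgeod {δ K : ℝ} (hδ : 0 ≤ δ) (hyp : DeltaHypSpace Z δ)
    (hgeo : IsGeodesicSpace Z) (hK : 1 ≤ K) {x y : Z} {L : ℝ} {α : ℝ → Z}
    (hα : IsQGeodSeg K x y L α) {σ : ℝ → Z} (hσ : IsGeodSegTo x y σ)
    {t : ℝ} (ht0 : 0 ≤ t) (ht1 : t ≤ dist x y) :
    ∃ s, 0 ≤ s ∧ s ≤ L ∧ dist (σ t) (α s) ≤ R₀ δ K := by
  obtain ⟨hL0, hα0, hαL, hαq⟩ := hα
  have hK0 : (0:ℝ) < K := by linarith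
  set d := dist x y with hd
  have hd0 : (0:ℝ) ≤ d := dist_nonneg
  set N := ⌈L⌉₊ with hN
  set z : ℕ → Z := fun i => α (min (i:ℝ) L) with hz
  have hmem : ∀ i : ℕ, min (i:ℝ) L ∈ Set.Icc (0:ℝ) L :=
    fun i => ⟨le_min (Nat.cast_nonneg i) hL0, min_le_right _ _⟩
  have hz0 : z 0 = x := by
    show α (min ((0:ℕ):ℝ) L) = x
    rw [Nat.cast_zero, min_eq_left hL0, hα0]
  have hzN : z N = y := by
    show α (min ((N:ℕ):ℝ) L) = y
    rw [min_eq_right (Nat.le_ceil L), hαL]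
  have hstep : ∀ i : ℕ, dist (z i) (z (i + 1)) ≤ 2 * K := by
    intro i
    have h := (hαq _ _ (hmem i) (hmem (i + 1))).2
    have habs : |min (i:ℝ) L - min ((i:ℝ) + 1) L| ≤ 1 := by
      rcases le_total ((i:ℝ) + 1) L with h1 | h1
      · rw [min_eq_left (by linarith), min_eq_left h1, abs_of_nonpos (by linarith)]
        linarith
      · rw [min_eq_right h1]
        rcases le_total ((i:ℝ)) L with h2 | h2
        · rw [min_eq_left h2, abs_of_nonpos (by linarith)]
          linarith
        · rw [min_eq_right h2, sub_self, abs_zero]; norm_num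
    have hcast : ((i + 1 : ℕ) : ℝ) = (i:ℝ) + 1 := by push_cast; ring
    rw [hcast] at h
    show dist (α (min ((i:ℕ):ℝ) L)) (α (min ((i + 1 : ℕ):ℝ) L)) ≤ 2 * K
    rw [hcast]
    nlinarith [h, habs, abs_nonneg (min (i:ℝ) L - min ((i:ℝ) + 1) L)]
  set S : Set Z := Set.range (fun i : Fin (N + 1) => z i) with hS
  have hSfin : S.Finite := Set.finite_range _
  have hSne : S.Nonempty := ⟨z 0, ⟨0, rfl⟩⟩
  have hScpt : IsCompact S := hSfin.isCompact
  have hmemS : ∀ i : ℕ, i ≤ N → z i ∈ S := fun i hi => ⟨⟨i, by omega⟩, rfl⟩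
  have hcont : ContinuousOn (fun u => Metric.infDist (σ u) S) (Set.Icc 0 d) := by
    have hlip : LipschitzOnWith 1 σ (Set.Icc 0 d) := by
      apply LipschitzOnWith.of_dist_le_mul
      intro s hs t ht
      rw [hσ.2.2 s t hs.1 hs.2 ht.1 ht.2]
      rw [NNReal.coe_one, one_mul, Real.dist_eq]
    exact (Metric.continuous_infDist_pt S).comp_continuousOn hlip.continuousOn
  obtain ⟨ts, hts, hmax⟩ := isCompact_Icc.exists_isMaxOn (Set.nonempty_Icc.2 hd0) hcont
  set w := σ ts with hwdef
  set D₀ := Metric.infDist (σ ts) S with hD₀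
  have hD₀0 : 0 ≤ D₀ := Metric.infDist_nonneg
  have hlow : ∀ i, i ≤ N → D₀ ≤ dist w (z i) :=
    fun i hi => Metric.infDist_le_dist_of_mem (hmemS i hi)
  have hts0 : 0 ≤ ts := hts.1
  have htsd : ts ≤ d := hts.2
  -- the main bound
  have hmain : D₀ ≤ R₀ δ K := by
    set a := max (ts - 2 * D₀) 0 with ha
    set b₂ := min (ts + 2 * D₀) d with hb₂
    have ha0 : 0 ≤ a := le_max_right _ _
    have had : a ≤ d := max_le (by linarith) hd0
    have hats : a ≤ ts := max_le (by linarith) hts0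
    have hb₂d : b₂ ≤ d := min_le_right _ _
    have htsb₂ : ts ≤ b₂ := le_min (by linarith) htsd
    have hb₂0 : 0 ≤ b₂ := le_trans hts0 htsb₂
    set y₁ := σ a with hy₁
    set y₂ := σ b₂ with hy₂
    have hwy₁ : dist y₁ w = ts - a := by
      rw [hσ.2.2 a ts ha0 had hts0 htsd, abs_of_nonpos (by linarith)]; ring
    have hwy₂ : dist w y₂ = b₂ - ts := by
      rw [hσ.2.2 ts b₂ hts0 htsd hb₂0 hb₂d, abs_of_nonpos (by linarith)]; ring
    have hy₁y₂ : dist y₁ y₂ = b₂ - a := by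
      rw [hσ.2.2 a b₂ ha0 had hb₂0 hb₂d, abs_of_nonpos (by linarith)]; ring
    have hside₁ : ∃ i₁, i₁ ≤ N ∧ dist y₁ (z i₁) ≤ D₀ ∧
        ∀ p : Z, dist y₁ p ≤ dist y₁ (z i₁) → D₀ ≤ dist w p := by
      by_cases hc : ts - 2 * D₀ ≤ 0
      · have haz : a = 0 := max_eq_right hc
        have hy₁x : y₁ = z 0 := by rw [hy₁, haz, hσ.1, hz0]
        refine ⟨0, Nat.zero_le _, by rw [hy₁x, dist_self]; exact hD₀0, ?_⟩
        intro p hp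
        rw [hy₁x, dist_self] at hp
        have hpe : z 0 = p := dist_eq_zero.mp (le_antisymm hp dist_nonneg)
        rw [← hpe]
        exact hlow 0 (Nat.zero_le _)
      · have haz : a = ts - 2 * D₀ := max_eq_left (by linarith)
        have hfy₁ : Metric.infDist y₁ S ≤ D₀ := hmax ⟨ha0, had⟩
        obtain ⟨p₁, hp₁S, hp₁⟩ := hScpt.exists_infDist_eq_dist hSne y₁
        obtain ⟨⟨i₁, hi₁⟩, rfl⟩ := hp₁S
        refine ⟨i₁, by omega, by rw [← hp₁]; exact hfy₁, ?_⟩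
        intro p hp
        have h1 : dist y₁ ((fun i : Fin (N+1) => z i) ⟨i₁, hi₁⟩) ≤ D₀ := by
          rw [← hp₁]; exact hfy₁
        have h2 : dist w y₁ = 2 * D₀ := by rw [dist_comm, hwy₁, haz]; ring
        have htr : dist w y₁ ≤ dist w p + dist p y₁ := dist_triangle _ _ _
        have hpy : dist p y₁ = dist y₁ p := dist_comm _ _
        have hple : dist y₁ p ≤ D₀ := hp.trans h1
        linarith
    obtain ⟨i₁, hi₁N, hi₁d, hfar₁⟩ := hside₁
    have hside₂ : ∃ i₂, i₂ ≤ N ∧ dist y₂ (z i₂) ≤ D₀ ∧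
        ∀ p : Z, dist y₂ p ≤ dist y₂ (z i₂) → D₀ ≤ dist w p := by
      by_cases hc : d ≤ ts + 2 * D₀
      · have hbz : b₂ = d := min_eq_right hc
        have hy₂y : y₂ = z N := by rw [hy₂, hbz, hσ.last, hzN]
        refine ⟨N, le_rfl, by rw [hy₂y, dist_self]; exact hD₀0, ?_⟩
        intro p hp
        rw [hy₂y, dist_self] at hp
        have hpe : z N = p := dist_eq_zero.mp (le_antisymm hp dist_nonneg)
        rw [← hpe]
        exact hlow N le_rfl
      · have hbz : b₂ = ts + 2 * D₀ := min_eq_left (by linarith)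
        have hfy₂ : Metric.infDist y₂ S ≤ D₀ := hmax ⟨hb₂0, hb₂d⟩
        obtain ⟨p₂, hp₂S, hp₂⟩ := hScpt.exists_infDist_eq_dist hSne y₂
        obtain ⟨⟨i₂, hi₂⟩, rfl⟩ := hp₂S
        refine ⟨i₂, by omega, by rw [← hp₂]; exact hfy₂, ?_⟩
        intro p hp
        have h1 : dist y₂ ((fun i : Fin (N+1) => z i) ⟨i₂, hi₂⟩) ≤ D₀ := by
          rw [← hp₂]; exact hfy₂
        have h2 : dist w y₂ = 2 * D₀ := by rw [hwy₂, hbz]; ring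
        have htr : dist w y₂ ≤ dist w p + dist p y₂ := dist_triangle _ _ _
        have hpy : dist p y₂ = dist y₂ p := dist_comm _ _
        have hple : dist y₂ p ≤ D₀ := hp.trans h1
        linarith
    obtain ⟨i₂, hi₂N, hi₂d, hfar₂⟩ := hside₂
    obtain ⟨g₁, hg₁⟩ := hgeo y₁ (z i₁)
    obtain ⟨g₂, hg₂⟩ := hgeo y₂ (z i₂)
    have hc2K : (0:ℝ) < 2 * K := by linarith
    obtain ⟨hch₁, hpts₁⟩ := sample_chain hg₁ hc2K
    obtain ⟨hch₂, hpts₂⟩ := sample_chain hg₂ hc2K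
    obtain ⟨Γz, hΓz, hptsz⟩ := z_chain hstep i₁ i₂
    -- concatenate: y₁ → z i₁ → z i₂ → y₂
    obtain ⟨Γa, hΓa, hptsa⟩ := hch₁.concat hΓz
    obtain ⟨Γb, hΓb, hptsb⟩ := hΓa.concat hch₂.rev
    set m₁ := ⌈dist y₁ (z i₁) / (2 * K)⌉₊ with hm₁
    set m₂ := ⌈dist y₂ (z i₂) / (2 * K)⌉₊ with hm₂
    set NΓ := m₁ + Nat.dist i₁ i₂ + m₂ with hNΓ
    -- all chain points are at distance ≥ D₀ from w
    have hfarall : ∀ j, j ≤ NΓ → D₀ ≤ dist w (Γb j) := by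
      intro j hj
      rcases hptsb j hj with ⟨j₁, hj₁, he⟩ | ⟨j₂, hj₂, he⟩
      · rcases hptsa j₁ hj₁ with ⟨ja, hja, hea⟩ | ⟨jz, hjz, hez⟩
        · obtain ⟨u, hu0, hu1, heu⟩ := hpts₁ ja
          rw [he, hea, heu]
          apply hfar₁
          rw [hg₁.dist_base hu0 hu1]
          exact hu1
        · obtain ⟨i, hiN, hei⟩ := hptsz jz hjz
          rw [he, hez, hei]
          exact hlow i (le_trans hiN (by omega))
      · -- reversed sample chain of g₂
        obtain ⟨u, hu0, hu1, heu⟩ := hpts₂ (m₂ - j₂)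
        rw [he]
        show D₀ ≤ dist w (g₂ (min (((m₂ - j₂ : ℕ):ℝ) * (2*K)) (dist y₂ (z i₂))))
        rw [heu]
        apply hfar₂
        rw [hg₂.dist_base hu0 hu1]
        exact hu1
    -- apply the chain lemma
    have hbetw : dist y₁ w + dist w y₂ = dist y₁ y₂ := by
      rw [hwy₁, hwy₂, hy₁y₂]
      ring
    have hNle : NΓ ≤ 2 ^ (Nat.log 2 NΓ + 1) := (Nat.lt_pow_succ_log_self one_lt_two NΓ).le
    obtain ⟨j, hjN, hjb⟩ := chain_near_between hδ hyp hgeo (le_of_lt hc2K)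
      (Nat.log 2 NΓ + 1) NΓ hNle Γb y₁ y₂ w hΓb hbetw
    have hD₀le : D₀ ≤ 3 * δ * ((Nat.log 2 NΓ : ℝ) + 1) + 2 * K := by
      have h1 := hfarall j hjN
      have hcast : ((Nat.log 2 NΓ + 1 : ℕ) : ℝ) = (Nat.log 2 NΓ : ℝ) + 1 := by push_cast; ring
      rw [hcast] at hjb
      linarith
    -- bound NΓ linearly in D₀
    have hm₁le : (m₁ : ℝ) ≤ D₀ + 1 := by
      have h1 : (m₁:ℝ) < dist y₁ (z i₁) / (2 * K) + 1 := Nat.ceil_lt_add_one (by positivity)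
      have h2 : dist y₁ (z i₁) / (2 * K) ≤ dist y₁ (z i₁) := by
        apply div_le_self dist_nonneg (by linarith)
      linarith
    have hm₂le : (m₂ : ℝ) ≤ D₀ + 1 := by
      have h1 : (m₂:ℝ) < dist y₂ (z i₂) / (2 * K) + 1 := Nat.ceil_lt_add_one (by positivity)
      have h2 : dist y₂ (z i₂) / (2 * K) ≤ dist y₂ (z i₂) := by
        apply div_le_self dist_nonneg (by linarith)
      linarith
    have hdz : (Nat.dist i₁ i₂ : ℝ) ≤ 6 * K * D₀ + K ^ 2 + 1 := by
      have hzz : dist (z i₁) (z i₂) ≤ 6 * D₀ := by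
        have t1 : dist (z i₁) (z i₂) ≤ dist (z i₁) y₁ + dist y₁ y₂ + dist y₂ (z i₂) :=
          dist_triangle4 _ _ _ _
        have t2 : dist (z i₁) y₁ = dist y₁ (z i₁) := dist_comm _ _
        have t3 : b₂ - a ≤ 4 * D₀ := by
          have u1 : b₂ ≤ ts + 2 * D₀ := min_le_left _ _
          have u2 : ts - 2 * D₀ ≤ a := le_max_left _ _
          linarith
        rw [hy₁y₂] at t1
        linarith
      have hql := (hαq _ _ (hmem i₁) (hmem i₂)).1
      have habs : (Nat.dist i₁ i₂ : ℝ) - 1 ≤ |min (i₁:ℝ) L - min (i₂:ℝ) L| := by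
        rcases le_total i₁ i₂ with hii | hii
        · rw [Nat.dist_eq_sub_of_le hii, abs_sub_comm]
          have hcast : ((i₂ - i₁ : ℕ) : ℝ) = (i₂:ℝ) - (i₁:ℝ) := by
            push_cast [hii]; ring
          rw [hcast]
          have hmono : min (i₁:ℝ) L ≤ min (i₂:ℝ) L := by
            apply min_le_min _ le_rfl
            exact_mod_cast hii
          rw [abs_of_nonneg (by linarith)]
          rcases le_total ((i₂:ℝ)) L with h1 | h1
          · rw [min_eq_left h1]
            have : min (i₁:ℝ) L = (i₁:ℝ) := min_eq_left (by
              have : (i₁:ℝ) ≤ (i₂:ℝ) := by exact_mod_cast hii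
              linarith)
            rw [this]; linarith
          · rw [min_eq_right h1]
            have hi₂N' : (i₂:ℝ) ≤ N := by exact_mod_cast hi₂N
            have hNL : (N:ℝ) < L + 1 := by
              have := Nat.ceil_lt_add_one hL0
              exact_mod_cast this
            have : min (i₁:ℝ) L ≤ (i₁:ℝ) := min_le_left _ _
            linarith
        · rw [Nat.dist_eq_sub_of_le_right hii]
          have hcast : ((i₁ - i₂ : ℕ) : ℝ) = (i₁:ℝ) - (i₂:ℝ) := by
            push_cast [hii]; ring
          rw [hcast]
          have hmono : min (i₂:ℝ) L ≤ min (i₁:ℝ) L := by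
            apply min_le_min _ le_rfl
            exact_mod_cast hii
          rw [abs_of_nonneg (by linarith)]
          rcases le_total ((i₁:ℝ)) L with h1 | h1
          · rw [min_eq_left h1]
            have : min (i₂:ℝ) L = (i₂:ℝ) := min_eq_left (by
              have : (i₂:ℝ) ≤ (i₁:ℝ) := by exact_mod_cast hii
              linarith)
            rw [this]; linarith
          · rw [min_eq_right h1]
            have hi₁N' : (i₁:ℝ) ≤ N := by exact_mod_cast hi₁N
            have hNL : (N:ℝ) < L + 1 := by
              have := Nat.ceil_lt_add_one hL0
              exact_mod_cast this
            have : min (i₂:ℝ) L ≤ (i₂:ℝ) := min_le_left _ _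
            linarith
      -- (1/K) * |Δs| - K ≤ dist ≤ 6 D₀
      have h6 : (1 / K) * |min (i₁:ℝ) L - min (i₂:ℝ) L| - K ≤ 6 * D₀ := hql.trans hzz
      have h7' := mul_le_mul_of_nonneg_left h6 hK0.le
      have hexp : K * (1 / K * |min (i₁:ℝ) L - min (i₂:ℝ) L| - K)
          = |min (i₁:ℝ) L - min (i₂:ℝ) L| - K ^ 2 := by
        field_simp
      rw [hexp] at h7'
      linarith
    have hNΓle : (NΓ : ℝ) ≤ (6 * K + 2) * D₀ + (K ^ 2 + 3) := by
      have : (NΓ:ℝ) = (m₁:ℝ) + (Nat.dist i₁ i₂ : ℝ) + (m₂:ℝ) := by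
        rw [hNΓ]; push_cast; ring
      rw [this]
      linarith
    exact resolve_log_bound hδ hK hD₀0 hD₀le hNΓle
  -- conclude for our point t
  have hft : Metric.infDist (σ t) S ≤ D₀ := hmax ⟨ht0, ht1⟩
  obtain ⟨zz, hzzS, hzz⟩ := hScpt.exists_infDist_eq_dist hSne (σ t)
  obtain ⟨⟨i, hi⟩, rfl⟩ := hzzS
  refine ⟨min (i:ℝ) L, (hmem i).1, (hmem i).2, ?_⟩
  have : dist (σ t) (z i) = Metric.infDist (σ t) S := hzz.symm
  rw [hz] at this
  calc dist (σ t) (α (min (i:ℝ) L)) = Metric.infDist (σ t) S := this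
    _ ≤ D₀ := hft
    _ ≤ R₀ δ K := hmain

lemma IsRayFrom.dist_base {b : Z} {ρ : ℝ → Z} (h : IsRayFrom b ρ) {t : ℝ} (ht : 0 ≤ t) :
    dist b (ρ t) = t := by
  have h2 := h.2 0 t le_rfl ht
  rw [h.1] at h2
  rw [h2, zero_sub, abs_neg, abs_of_nonneg ht]

lemma IsRayFrom.geodSeg {b : Z} {ρ : ℝ → Z} (h : IsRayFrom b ρ) {T : ℝ} (hT : 0 ≤ T) :
    IsGeodSegTo b (ρ T) (fun r => ρ (min r T)) := by
  have hd : dist b (ρ T) = T := h.dist_base hT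
  refine ⟨?_, ?_, ?_⟩
  · show ρ (min 0 T) = b
    rw [min_eq_left hT, h.1]
  · intro t ht'
    rw [hd] at ht'
    show ρ (min t T) = ρ T
    rw [min_eq_right ht']
  · intro s t hs hs' ht ht'
    rw [hd] at hs' ht'
    show dist (ρ (min s T)) (ρ (min t T)) = |s - t|
    rw [min_eq_left hs', min_eq_left ht']
    exact h.2 s t hs ht

lemma rays_pointwise_close {δ : ℝ} (hδ : 0 ≤ δ) (hyp : DeltaHypSpace Z δ)
    (hgeo : IsGeodesicSpace Z) {b : Z} {ρ₁ ρ₂ : ℝ → Z}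
    (h₁ : IsRayFrom b ρ₁) (h₂ : IsRayFrom b ρ₂) {C : ℝ} (hC : 0 ≤ C)
    (h : ∀ t, 0 ≤ t → ∃ s, 0 ≤ s ∧ dist (ρ₁ t) (ρ₂ s) ≤ C)
    {t : ℝ} (ht : 0 ≤ t) : dist (ρ₁ t) (ρ₂ t) ≤ 6 * δ := by
  set T := t + C + 3 * δ + 2 with hT
  have hT0 : 0 ≤ T := by linarith
  obtain ⟨s, hs0, hsd⟩ := h T hT0
  have hbx : dist b (ρ₁ T) = T := h₁.dist_base hT0
  have hby : dist b (ρ₂ s) = s := h₂.dist_base hs0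
  have hbetw : dist b (ρ₁ t) + dist (ρ₁ t) (ρ₁ T) = dist b (ρ₁ T) := by
    rw [h₁.dist_base ht, hbx, h₁.2 t T ht hT0, abs_of_nonpos (by linarith)]
    ring
  obtain ⟨γ₂, hγ₂⟩ := hgeo (ρ₁ T) (ρ₂ s)
  have hseg := h₂.geodSeg hs0
  rcases slim_triangle hyp hbetw hseg hγ₂ with ⟨r, hr0, hr1, hb⟩ | ⟨r, hr0, hr1, hb⟩
  · rw [hby] at hr1
    rw [min_eq_left hr1] at hb
    have hd1 : dist b (ρ₂ r) = r := h₂.dist_base hr0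
    have e1 : dist b (ρ₁ t) = t := h₁.dist_base ht
    have tri1 : dist b (ρ₁ t) ≤ dist b (ρ₂ r) + dist (ρ₂ r) (ρ₁ t) := dist_triangle _ _ _
    have tri2 : dist b (ρ₂ r) ≤ dist b (ρ₁ t) + dist (ρ₁ t) (ρ₂ r) := dist_triangle _ _ _
    have ecomm : dist (ρ₂ r) (ρ₁ t) = dist (ρ₁ t) (ρ₂ r) := dist_comm _ _
    have htr : |r - t| ≤ 3 * δ := by
      rw [abs_le]
      constructor <;> linarith
    have h2' := h₂.2 r t hr0 ht
    have tri3 : dist (ρ₁ t) (ρ₂ t) ≤ dist (ρ₁ t) (ρ₂ r) + dist (ρ₂ r) (ρ₂ t) := dist_triangle _ _ _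
    rw [h2'] at tri3
    linarith [abs_le.mp htr]
  · exfalso
    have e1 : dist (ρ₁ T) (γ₂ r) = r := hγ₂.dist_base hr0 hr1
    have e2 : r ≤ C := hr1.trans hsd
    have tri1 : dist b (ρ₁ T) ≤ dist b (γ₂ r) + dist (γ₂ r) (ρ₁ T) := dist_triangle _ _ _
    have ecomm : dist (γ₂ r) (ρ₁ T) = dist (ρ₁ T) (γ₂ r) := dist_comm _ _
    have h3 : T - C ≤ dist b (γ₂ r) := by
      rw [hbx] at tri1
      linarith
    have e3 : dist b (ρ₁ t) = t := h₁.dist_base ht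
    have tri2 : dist b (γ₂ r) ≤ dist b (ρ₁ t) + dist (ρ₁ t) (γ₂ r) := dist_triangle _ _ _
    linarith

lemma rayClose_of_pointwise {ρ₁ ρ₂ : ℝ → Z} {C : ℝ}
    (h : ∀ t, 0 ≤ t → dist (ρ₁ t) (ρ₂ t) ≤ C) : rayClose ρ₁ ρ₂ := by
  have hle : EMetric.hausdorffEdist (ρ₁ '' Set.Ici 0) (ρ₂ '' Set.Ici 0) ≤ ENNReal.ofReal C := by
    apply EMetric.hausdorffEdist_le_of_mem_edist
    · rintro x ⟨t, ht, rfl⟩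
      refine ⟨ρ₂ t, ⟨t, ht, rfl⟩, ?_⟩
      rw [edist_dist]
      exact ENNReal.ofReal_le_ofReal (h t ht)
    · rintro x ⟨t, ht, rfl⟩
      refine ⟨ρ₁ t, ⟨t, ht, rfl⟩, ?_⟩
      rw [edist_dist, dist_comm]
      exact ENNReal.ofReal_le_ofReal (h t ht)
  exact ne_top_of_le_ne_top ENNReal.ofReal_ne_top hle

lemma rayClose_exists_near {ρ₁ ρ₂ : ℝ → Z} (h : rayClose ρ₁ ρ₂) :
    ∃ C, 0 ≤ C ∧ ∀ t, 0 ≤ t → ∃ s, 0 ≤ s ∧ dist (ρ₁ t) (ρ₂ s) ≤ C := by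
  set H := EMetric.hausdorffEdist (ρ₁ '' Set.Ici 0) (ρ₂ '' Set.Ici 0) with hH
  refine ⟨(H + 1).toReal, ENNReal.toReal_nonneg, fun t ht => ?_⟩
  have h1 : EMetric.infEdist (ρ₁ t) (ρ₂ '' Set.Ici 0) ≤ H :=
    EMetric.infEdist_le_hausdorffEdist_of_mem ⟨t, ht, rfl⟩
  have h2 : EMetric.infEdist (ρ₁ t) (ρ₂ '' Set.Ici 0) < H + 1 :=
    lt_of_le_of_lt h1 (ENNReal.lt_add_right h one_ne_zero)
  obtain ⟨y, hy_mem, hy⟩ := EMetric.infEdist_lt_iff.mp h2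
  obtain ⟨s, hs, rfl⟩ := hy_mem
  refine ⟨s, hs, ?_⟩
  rw [dist_edist]
  exact ENNReal.toReal_mono (ENNReal.add_ne_top.mpr ⟨h, ENNReal.one_ne_top⟩) hy.le

lemma rayClose_equivalence (b : Z) :
    Equivalence (fun ρ₁ ρ₂ : RaysFrom b => rayClose ρ₁.1 ρ₂.1) := by
  constructor
  · intro ρ
    unfold rayClose
    exact ne_of_eq_of_ne EMetric.hausdorffEdist_self ENNReal.zero_ne_top
  · intro ρ₁ ρ₂ h
    unfold rayClose at *
    exact ne_of_eq_of_ne EMetric.hausdorffEdist_comm h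
  · intro ρ₁ ρ₂ ρ₃ h1 h2
    unfold rayClose at *
    exact ne_top_of_le_ne_top (ENNReal.add_ne_top.mpr ⟨h1, h2⟩)
      EMetric.hausdorffEdist_triangle

lemma rayClose_of_rayPt_eq {b : Z} {ρ₁ ρ₂ : RaysFrom b} (h : rayPt ρ₁ = rayPt ρ₂) :
    rayClose ρ₁.1 ρ₂.1 :=
  ((rayClose_equivalence b).eqvGen_iff).mp (Quot.eqvGen_exact h)

lemma UCC.subseq {γ : ℕ → ℝ → Z} {f : ℝ → Z} (h : UCC γ f) {ψ : ℕ → ℕ} (hψ : StrictMono ψ) :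
    UCC (fun k => γ (ψ k)) f := by
  intro M ε hε
  obtain ⟨N, hN⟩ := h M ε hε
  exact ⟨N, fun n hn t ht htM => hN (ψ n) (le_trans hn hψ.le_apply) t ht htM⟩

lemma tendsto_dist_atTop_of_UCC {b : Z} {u : ℕ → Z} {γ : ℕ → ℝ → Z} {ρ : ℝ → Z}
    (hγ : ∀ n, IsGeodSegTo b (u n) (γ n)) (hρ : IsRayFrom b ρ) (h : UCC γ ρ) :
    Tendsto (fun n => dist b (u n)) atTop atTop := by
  rw [tendsto_atTop]
  intro M
  have hM'0 : (0:ℝ) ≤ max M 0 := le_max_right _ _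
  obtain ⟨N, hN⟩ := h (max M 0 + 1) 1 one_pos
  filter_upwards [eventually_ge_atTop N] with n hn
  by_contra hlt
  push_neg at hlt
  have h1 : dist b (u n) ≤ max M 0 + 1 := by
    have : M ≤ max M 0 := le_max_left _ _
    linarith
  have h2 : γ n (max M 0 + 1) = u n := (hγ n).2.1 _ h1
  have h3 := hN n hn (max M 0 + 1) (by positivity) le_rfl
  rw [h2] at h3
  have h4 : dist b (ρ (max M 0 + 1)) = max M 0 + 1 := hρ.dist_base (by positivity)
  have tri : dist b (ρ (max M 0 + 1)) ≤ dist b (u n) + dist (u n) (ρ (max M 0 + 1)) :=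
    dist_triangle _ _ _
  have : M ≤ max M 0 := le_max_left _ _
  linarith

lemma qgeod_rev {K : ℝ} {x y : Z} {L : ℝ} {α : ℝ → Z} (h : IsQGeodSeg K x y L α) :
    IsQGeodSeg K y x L (fun s => α (L - s)) := by
  obtain ⟨hL, h0, hL', hq⟩ := h
  refine ⟨hL, ?_, ?_, ?_⟩
  · show α (L - 0) = y
    rw [sub_zero]; exact hL'
  · show α (L - L) = x
    rw [sub_self]; exact h0
  · intro s t hs ht
    have hs' : L - s ∈ Set.Icc 0 L := ⟨by linarith [hs.2], by linarith [hs.1]⟩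
    have ht' : L - t ∈ Set.Icc 0 L := ⟨by linarith [ht.2], by linarith [ht.1]⟩
    have hq' := hq (L - s) (L - t) hs' ht'
    have habs : |L - s - (L - t)| = |s - t| := by
      rw [abs_sub_comm]
      congr 1
      ring
    rw [habs] at hq'
    exact hq'

lemma geod_from_base_near_qgeod {δ K : ℝ} (hδ : 0 ≤ δ) (hyp : DeltaHypSpace Z δ)
    (hgeo : IsGeodesicSpace Z) (hK : 1 ≤ K) {x y b : Z} {L : ℝ} {α : ℝ → Z}
    (hα : IsQGeodSeg K x y L α) {σ : ℝ → Z} (hσ : IsGeodSegTo b y σ)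
    {t : ℝ} (ht0 : 0 ≤ t) (ht1 : t ≤ dist b y) (htx : dist b x + 3 * δ < t) :
    ∃ s, 0 ≤ s ∧ s ≤ L ∧ dist (σ t) (α s) ≤ 3 * δ + R₀ δ K := by
  obtain ⟨γ₁, hγ₁⟩ := hgeo b x
  obtain ⟨γ₂, hγ₂⟩ := hgeo y x
  have hbetw : dist b (σ t) + dist (σ t) y = dist b y := by
    rw [hσ.dist_base ht0 ht1, hσ.dist_last ht0 ht1]; ring
  rcases slim_triangle hyp hbetw hγ₁ hγ₂ with ⟨r, hr0, hr1, hb⟩ | ⟨r, hr0, hr1, hb⟩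
  · exfalso
    have h1 : dist b (γ₁ r) = r := hγ₁.dist_base hr0 hr1
    have h2 : dist b (σ t) = t := hσ.dist_base ht0 ht1
    have tri : dist b (σ t) ≤ dist b (γ₁ r) + dist (γ₁ r) (σ t) := dist_triangle _ _ _
    have ecomm : dist (γ₁ r) (σ t) = dist (σ t) (γ₁ r) := dist_comm _ _
    linarith
  · obtain ⟨s', hs'0, hs'L, hs'⟩ :=
      geodesic_near_qgeod hδ hyp hgeo hK (qgeod_rev hα) hγ₂ hr0 hr1
    refine ⟨L - s', by linarith, by linarith, ?_⟩
    have tri : dist (σ t) (α (L - s')) ≤ dist (σ t) (γ₂ r) + dist (γ₂ r) (α (L - s')) :=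
      dist_triangle _ _ _
    have hs'' : dist (γ₂ r) (α (L - s')) ≤ R₀ δ K := hs'
    linarith

/-- Arzelà–Ascoli style extraction: a sequence of geodesic-like maps with isometry
radii tending to infinity subconverges uniformly on compacts to a geodesic ray. -/
lemma exists_ray_limit [ProperSpace Z] {b : Z} (η : ℕ → ℝ → Z) (R : ℕ → ℝ)
    (hR : Tendsto R atTop atTop)
    (h0 : ∀ k, η k 0 = b)
    (hiso : ∀ k s t, 0 ≤ s → s ≤ R k → 0 ≤ t → t ≤ R k → dist (η k s) (η k t) = |s - t|)
    (hlip : ∀ k s t, 0 ≤ s → 0 ≤ t → dist (η k s) (η k t) ≤ |s - t|) :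
    ∃ ψ : ℕ → ℕ, StrictMono ψ ∧ ∃ ρ : ℝ → Z, IsRayFrom b ρ ∧ UCC (fun k => η (ψ k)) ρ := by
  -- enumeration of the nonnegative rationals
  set e : ℕ → ℝ := fun i => max (((Denumerable.eqv ℚ).symm i : ℚ) : ℝ) 0 with he
  have he0 : ∀ i, 0 ≤ e i := fun i => le_max_right _ _
  have hedense : ∀ t ε : ℝ, 0 ≤ t → 0 < ε → ∃ i, |e i - t| ≤ ε := by
    intro t ε ht hε
    obtain ⟨q, hq1, hq2⟩ := exists_rat_btwn (lt_add_of_pos_right t hε)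
    refine ⟨(Denumerable.eqv ℚ) q, ?_⟩
    have hei : e ((Denumerable.eqv ℚ) q) = (q:ℝ) := by
      rw [he]
      simp only [Equiv.symm_apply_apply]
      exact max_eq_left (by linarith)
    rw [hei]
    rw [abs_of_nonneg (by linarith : (0:ℝ) ≤ (q:ℝ) - t)]
    linarith
  -- pointwise subconvergence at all the e i simultaneously, by compactness
  have hball : ∀ k, (fun i => η k (e i)) ∈ Set.univ.pi (fun i => Metric.closedBall b (e i)) := by
    intro k
    rw [Set.mem_univ_pi]
    intro i
    rw [Metric.mem_closedBall, dist_comm, ← h0 k]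
    have := hlip k 0 (e i) le_rfl (he0 i)
    rw [zero_sub, abs_neg, abs_of_nonneg (he0 i)] at this
    exact this
  have hcpt : IsCompact (Set.univ.pi (fun i : ℕ => Metric.closedBall b (e i))) :=
    isCompact_univ_pi (fun i => isCompact_closedBall b (e i))
  obtain ⟨G, _, ψ, hψ, htend⟩ := hcpt.tendsto_subseq hball
  have hpt : ∀ i, Tendsto (fun k => η (ψ k) (e i)) atTop (𝓝 (G i)) := by
    intro i
    have := tendsto_pi_nhds.mp htend i
    exact this
  -- Cauchy at every nonnegative real
  have hcauchy : ∀ t, 0 ≤ t → CauchySeq (fun k => η (ψ k) t) := by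
    intro t ht
    rw [Metric.cauchySeq_iff]
    intro ε hε
    obtain ⟨i, hi⟩ := hedense t (ε / 8) ht (by positivity)
    have hcau : CauchySeq (fun k => η (ψ k) (e i)) := (hpt i).cauchySeq
    rw [Metric.cauchySeq_iff] at hcau
    obtain ⟨N, hN⟩ := hcau (ε / 2) (by positivity)
    refine ⟨N, fun m hm n hn => ?_⟩
    have h1 : dist (η (ψ m) t) (η (ψ m) (e i)) ≤ |t - e i| := hlip _ _ _ ht (he0 i)
    have h2 : dist (η (ψ n) (e i)) (η (ψ n) t) ≤ |e i - t| := hlip _ _ _ (he0 i) ht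
    have h3 := hN m hm n hn
    have tri : dist (η (ψ m) t) (η (ψ n) t) ≤
        dist (η (ψ m) t) (η (ψ m) (e i)) + dist (η (ψ m) (e i)) (η (ψ n) (e i)) +
          dist (η (ψ n) (e i)) (η (ψ n) t) := dist_triangle4 _ _ _ _
    have habs : |t - e i| ≤ ε / 8 := by rw [abs_sub_comm]; exact hi
    calc dist (η (ψ m) t) (η (ψ n) t) ≤ _ := tri
      _ < ε := by linarith [hi]
  have hex : ∀ t : ℝ, ∃ z : Z, 0 ≤ t → Tendsto (fun k => η (ψ k) t) atTop (𝓝 z) := by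
    intro t
    by_cases ht : 0 ≤ t
    · obtain ⟨z, hz⟩ := cauchySeq_tendsto_of_complete (hcauchy t ht)
      exact ⟨z, fun _ => hz⟩
    · exact ⟨b, fun h => absurd h ht⟩
  choose ρ hρ using hex
  have hRψ : Tendsto (fun k => R (ψ k)) atTop atTop := hR.comp hψ.tendsto_atTop
  have hiso' : ∀ s t, 0 ≤ s → 0 ≤ t → dist (ρ s) (ρ t) = |s - t| := by
    intro s t hs ht
    have h1 : Tendsto (fun k => dist (η (ψ k) s) (η (ψ k) t)) atTop (𝓝 (dist (ρ s) (ρ t))) :=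
      (hρ s hs).dist (hρ t ht)
    have h2 : ∀ᶠ k in atTop, dist (η (ψ k) s) (η (ψ k) t) = |s - t| := by
      filter_upwards [hRψ.eventually_ge_atTop (max s t)] with k hk
      exact hiso (ψ k) s t hs (le_trans (le_max_left _ _) hk) ht (le_trans (le_max_right _ _) hk)
    have h3 : Tendsto (fun k => dist (η (ψ k) s) (η (ψ k) t)) atTop (𝓝 (|s - t|)) :=
      Tendsto.congr' (h2.mono fun k hk => hk.symm) tendsto_const_nhds
    exact tendsto_nhds_unique h1 h3
  have hρ0 : ρ 0 = b := by
    have h1 : Tendsto (fun k => η (ψ k) 0) atTop (𝓝 (ρ 0)) := hρ 0 le_rfl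
    have h2 : (fun k => η (ψ k) 0) = fun _ => b := funext fun k => h0 (ψ k)
    rw [h2] at h1
    exact tendsto_nhds_unique h1 tendsto_const_nhds
  refine ⟨ψ, hψ, ρ, ⟨hρ0, hiso'⟩, ?_⟩
  intro M ε hε
  by_cases hM : M < 0
  · exact ⟨0, fun n _ t ht htM => absurd (ht.trans htM) (not_le.mpr hM)⟩
  push_neg at hM
  have hε4 : (0:ℝ) < ε / 4 := by positivity
  have hgrid : ∀ j : ℕ, ∃ N, ∀ k ≥ N,
      dist (η (ψ k) ((j:ℝ) * (ε / 4))) (ρ ((j:ℝ) * (ε / 4))) < ε / 4 := by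
    intro j
    have h1 := hρ ((j:ℝ) * (ε / 4)) (by positivity)
    rw [Metric.tendsto_atTop] at h1
    exact h1 (ε / 4) hε4
  choose Nf hNf using hgrid
  set m := ⌊M / (ε / 4)⌋₊ with hm
  refine ⟨(Finset.range (m + 1)).sup Nf, fun n hn t ht htM => ?_⟩
  set j := ⌊t / (ε / 4)⌋₊ with hj
  have hjm : j ≤ m := Nat.floor_le_floor (by
    exact div_le_div_of_nonneg_right htM hε4.le)
  have htj1 : (j:ℝ) * (ε / 4) ≤ t := by
    have h1 : (j:ℝ) ≤ t / (ε / 4) := Nat.floor_le (by positivity)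
    calc (j:ℝ) * (ε / 4) ≤ (t / (ε / 4)) * (ε / 4) :=
          mul_le_mul_of_nonneg_right h1 hε4.le
      _ = t := by field_simp
  have htj2 : t - (j:ℝ) * (ε / 4) ≤ ε / 4 := by
    have h2 := Nat.lt_floor_add_one (t / (ε / 4))
    have h3 : t < ((j:ℝ) + 1) * (ε / 4) := by
      calc t = (t / (ε / 4)) * (ε / 4) := by field_simp
        _ < ((j:ℝ) + 1) * (ε / 4) := by
            apply mul_lt_mul_of_pos_right _ hε4
            exact_mod_cast h2
    linarith
  have hNj : Nf j ≤ (Finset.range (m + 1)).sup Nf :=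
    Finset.le_sup (Finset.mem_range.mpr (by omega))
  have h1 := hNf j n (le_trans hNj hn)
  have h2 : dist (η (ψ n) t) (η (ψ n) ((j:ℝ) * (ε / 4))) ≤ |t - (j:ℝ) * (ε / 4)| :=
    hlip _ _ _ ht (by positivity)
  have h3 : dist (ρ ((j:ℝ) * (ε / 4))) (ρ t) = |(j:ℝ) * (ε / 4) - t| :=
    hiso' _ _ (by positivity) ht
  have tri : dist (η (ψ n) t) (ρ t) ≤
      dist (η (ψ n) t) (η (ψ n) ((j:ℝ) * (ε / 4))) +
        dist (η (ψ n) ((j:ℝ) * (ε / 4))) (ρ ((j:ℝ) * (ε / 4))) +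
          dist (ρ ((j:ℝ) * (ε / 4))) (ρ t) := dist_triangle4 _ _ _ _
  have habs1 : |t - (j:ℝ) * (ε / 4)| ≤ ε / 4 := by
    rw [abs_of_nonneg (by linarith)]; linarith
  have habs2 : |(j:ℝ) * (ε / 4) - t| ≤ ε / 4 := by
    rw [abs_sub_comm]; exact habs1
  rw [h3] at tri
  linarith

/-- If a sequence of points stays within bounded distance of points `ρ (T k)` going to
infinity along a ray representing `ξ`, then the sequence converges to `ξ`. -/
lemma seqConvTo_of_near_ray [ProperSpace Z] {δ : ℝ} (hδ : 0 ≤ δ) (hyp : DeltaHypSpace Z δ)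
    (hgeo : IsGeodesicSpace Z) {b : Z} (ρ : RaysFrom b) {ξ : RBdry b} (hξ : rayPt ρ = ξ)
    (w : ℕ → Z) (T : ℕ → ℝ) (hT0 : ∀ k, 0 ≤ T k) (hT : Tendsto T atTop atTop)
    {C₁ : ℝ} (hw : ∀ k, dist (w k) (ρ.1 (T k)) ≤ C₁) :
    SeqConvTo b w ξ := by
  intro η hη φ hφ
  have hC₁ : 0 ≤ C₁ := le_trans dist_nonneg (hw 0)
  have hRbound : ∀ k, T k - C₁ ≤ dist b (w k) := by
    intro k
    have h1 : dist b (ρ.1 (T k)) = T k := ρ.2.dist_base (hT0 k)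
    have tri : dist b (ρ.1 (T k)) ≤ dist b (w k) + dist (w k) (ρ.1 (T k)) := dist_triangle _ _ _
    linarith [hw k]
  have hRtend : Tendsto (fun k => dist b (w (φ k))) atTop atTop := by
    apply tendsto_atTop_mono (fun k => hRbound (φ k))
    exact tendsto_atTop_add_const_right _ _ (hT.comp hφ.tendsto_atTop)
  obtain ⟨ψ, hψ, ρ2, hρ2ray, hUCC⟩ := exists_ray_limit (fun k => η (φ k))
      (fun k => dist b (w (φ k))) hRtend (fun k => (hη (φ k)).1)
      (fun k s t hs hs' ht ht' => (hη (φ k)).2.2 s t hs hs' ht ht')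
      (fun k s t hs ht => (hη (φ k)).lip hs ht)
  have hnear : ∀ j t, 0 ≤ t → ∃ s, 0 ≤ s ∧ dist (η j t) (ρ.1 s) ≤ 3 * δ + C₁ := by
    intro j t ht
    by_cases hcase : dist b (w j) ≤ t
    · rw [(hη j).2.1 t hcase]
      exact ⟨T j, hT0 j, by linarith [hw j]⟩
    · push_neg at hcase
      have hbetw : dist b (η j t) + dist (η j t) (w j) = dist b (w j) := by
        rw [(hη j).dist_base ht hcase.le, (hη j).dist_last ht hcase.le]; ring
      obtain ⟨γ₂, hγ₂⟩ := hgeo (w j) (ρ.1 (T j))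
      have hseg := ρ.2.geodSeg (hT0 j)
      rcases slim_triangle hyp hbetw hseg hγ₂ with ⟨r, hr0, hr1, hb⟩ | ⟨r, hr0, hr1, hb⟩
      · exact ⟨min r (T j), le_min hr0 (hT0 j), hb.trans (by linarith)⟩
      · refine ⟨T j, hT0 j, ?_⟩
        have h1 : dist (γ₂ r) (ρ.1 (T j)) = dist (w j) (ρ.1 (T j)) - r := hγ₂.dist_last hr0 hr1
        have tri : dist (η j t) (ρ.1 (T j)) ≤ dist (η j t) (γ₂ r) + dist (γ₂ r) (ρ.1 (T j)) :=
          dist_triangle _ _ _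
        have h2 := hw j
        linarith
  have hnear2 : ∀ t, 0 ≤ t → ∃ s, 0 ≤ s ∧ dist (ρ2 t) (ρ.1 s) ≤ 3 * δ + C₁ + 1 := by
    intro t ht
    obtain ⟨N, hN⟩ := hUCC t 1 one_pos
    obtain ⟨s, hs0, hs⟩ := hnear (φ (ψ N)) t ht
    refine ⟨s, hs0, ?_⟩
    have h1 := hN N le_rfl t ht le_rfl
    have tri : dist (ρ2 t) (ρ.1 s) ≤ dist (ρ2 t) (η (φ (ψ N)) t) + dist (η (φ (ψ N)) t) (ρ.1 s) :=
      dist_triangle _ _ _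
    have hcomm : dist (ρ2 t) (η (φ (ψ N)) t) = dist (η (φ (ψ N)) t) (ρ2 t) := dist_comm _ _
    have h1' : dist (η (φ (ψ N)) t) (ρ2 t) ≤ 1 := h1
    linarith
  have hptw : ∀ t, 0 ≤ t → dist (ρ2 t) (ρ.1 t) ≤ 6 * δ := fun t ht =>
    rays_pointwise_close hδ hyp hgeo hρ2ray ρ.2 (by linarith) hnear2 ht
  have hclose : rayClose ρ2 ρ.1 := rayClose_of_pointwise hptw
  refine ⟨ψ, hψ, ⟨ρ2, hρ2ray⟩, hUCC, ?_⟩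
  rw [← hξ]
  exact Quot.sound hclose

end Aux

set_option maxHeartbeats 1000000 in
/-- Let `Z` be a proper geodesic `δ`-hyperbolic space, `K ≥ 1`, and
`{xₙ}`, `{yₙ}` sequences with `lim xₙ = lim yₙ = ξ ∈ ∂Z`, where `xₙ` is joined to `x₁`
and `yₙ` to `y₁` by `K`-quasi-geodesics `αₙ`, `βₙ`.  Then there is a constant `D`
depending only on `δ`, `d(x₁, y₁)` and `K`, a subsequence, and points `pₙ ∈ αₙ`,
`qₙ ∈ βₙ` with `d(pₙ, qₙ) ≤ D` and `lim pₙ = lim qₙ = ξ`. -/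
theorem quasigeodesics_to_common_boundary_point :
    ∃ D : ℝ → ℝ → ℝ → ℝ,
      ∀ (Z : Type) [inst : MetricSpace Z] [inst2 : @ProperSpace Z
          (@MetricSpace.toPseudoMetricSpace Z inst)],
        IsGeodesicSpace Z →
        ∀ δ : ℝ, 0 ≤ δ → DeltaHypSpace Z δ →
        ∀ K : ℝ, 1 ≤ K →
        ∀ (b : Z) (u v : ℕ → Z) (ξ : RBdry b),
          SeqConvTo b u ξ → SeqConvTo b v ξ →
        ∀ (γ g : ℕ → ℝ → Z) (L L' : ℕ → ℝ),
          (∀ n, IsQGeodSeg K (u 0) (u n) (L n) (γ n)) →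
          (∀ n, IsQGeodSeg K (v 0) (v n) (L' n) (g n)) →
        ∃ φ : ℕ → ℕ, StrictMono φ ∧
          ∃ p q : ℕ → ℝ,
            (∀ k, p k ∈ Set.Icc 0 (L (φ k))) ∧
            (∀ k, q k ∈ Set.Icc 0 (L' (φ k))) ∧
            (∀ k, dist (γ (φ k) (p k)) (g (φ k) (q k)) ≤ D δ (dist (u 0) (v 0)) K) ∧
            SeqConvTo b (fun k => γ (φ k) (p k)) ξ ∧
            SeqConvTo b (fun k => g (φ k) (q k)) ξ := by
  refine ⟨fun δ _ K => 12 * δ + 2 * R₀ δ K + 2, ?_⟩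
  intro Z _ _ hgeo δ hδ hyp K hK b u v ξ hu hv γ g L L' hγ hg
  choose σ hσ using fun n => hgeo b (u n)
  choose τ hτ using fun n => hgeo b (v n)
  obtain ⟨ψ₁, hψ₁, ρ, hUCCρ, hρξ⟩ := hu σ hσ id strictMono_id
  obtain ⟨ψ₂, hψ₂, ρ', hUCCρ', hρ'ξ⟩ := hv τ hτ ψ₁ hψ₁
  set φ₀ : ℕ → ℕ := fun k => ψ₁ (ψ₂ k) with hφ₀
  have hφ₀m : StrictMono φ₀ := hψ₁.comp hψ₂
  have hUCCσ : UCC (fun k => σ (φ₀ k)) ρ.1 := hUCCρ.subseq hψ₂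
  have hUCCτ : UCC (fun k => τ (φ₀ k)) ρ'.1 := hUCCρ'
  -- the two limit rays are uniformly close
  have hclose : rayClose ρ.1 ρ'.1 := rayClose_of_rayPt_eq (hρξ.trans hρ'ξ.symm)
  obtain ⟨C₂, hC₂0, hC₂⟩ := rayClose_exists_near hclose
  have hρρ' : ∀ t, 0 ≤ t → dist (ρ.1 t) (ρ'.1 t) ≤ 6 * δ := fun t ht =>
    rays_pointwise_close hδ hyp hgeo ρ.2 ρ'.2 hC₂0 hC₂ ht
  -- target times
  set T : ℕ → ℝ := fun k => dist b (u 0) + dist b (v 0) + 3 * δ + 1 + k with hTdef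
  have hT0 : ∀ k, 0 ≤ T k := by
    intro k
    rw [hTdef]
    have := dist_nonneg (x := b) (y := u 0)
    have := dist_nonneg (x := b) (y := v 0)
    positivity
  have hT : Tendsto T atTop atTop := by
    rw [hTdef]
    exact tendsto_atTop_add_const_left _ _ tendsto_natCast_atTop_atTop
  -- select a good subsequence
  have hdu : Tendsto (fun j => dist b (u (φ₀ j))) atTop atTop :=
    tendsto_dist_atTop_of_UCC (fun j => hσ (φ₀ j)) ρ.2 hUCCσ
  have hdv : Tendsto (fun j => dist b (v (φ₀ j))) atTop atTop :=
    tendsto_dist_atTop_of_UCC (fun j => hτ (φ₀ j)) ρ'.2 hUCCτ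
  have hP : ∀ k : ℕ, ∀ᶠ j in atTop,
      (T k ≤ dist b (u (φ₀ j)) ∧ T k ≤ dist b (v (φ₀ j))) ∧
      (∀ t, 0 ≤ t → t ≤ T k → dist (σ (φ₀ j) t) (ρ.1 t) ≤ 1) ∧
      (∀ t, 0 ≤ t → t ≤ T k → dist (τ (φ₀ j) t) (ρ'.1 t) ≤ 1) := by
    intro k
    have e1 := hdu.eventually_ge_atTop (T k)
    have e2 := hdv.eventually_ge_atTop (T k)
    obtain ⟨N₁, hN₁⟩ := hUCCσ (T k) 1 one_pos
    obtain ⟨N₂, hN₂⟩ := hUCCτ (T k) 1 one_pos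
    filter_upwards [e1, e2, eventually_ge_atTop N₁, eventually_ge_atTop N₂] with j h1 h2 h3 h4
    exact ⟨⟨h1, h2⟩, fun t ht htT => hN₁ j h3 t ht htT, fun t ht htT => hN₂ j h4 t ht htT⟩
  obtain ⟨φ₁, hφ₁, hgood⟩ := extraction_forall_of_eventually hP
  set φ : ℕ → ℕ := fun k => φ₀ (φ₁ k) with hφdef
  have hφm : StrictMono φ := hφ₀m.comp hφ₁
  -- choose the points
  have hpk : ∀ k, ∃ s, 0 ≤ s ∧ s ≤ L (φ k) ∧
      dist (σ (φ k) (T k)) (γ (φ k) s) ≤ 3 * δ + R₀ δ K := by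
    intro k
    have h1 := (hgood k).1.1
    have h2 : dist b (u 0) + 3 * δ < T k := by
      show dist b (u 0) + 3 * δ < dist b (u 0) + dist b (v 0) + 3 * δ + 1 + (k:ℝ)
      have h3 : (0:ℝ) ≤ (k:ℝ) := Nat.cast_nonneg k
      linarith [dist_nonneg (x := b) (y := v 0)]
    exact geod_from_base_near_qgeod hδ hyp hgeo hK (hγ (φ k)) (hσ (φ k)) (hT0 k) h1 h2
  have hqk : ∀ k, ∃ s, 0 ≤ s ∧ s ≤ L' (φ k) ∧
      dist (τ (φ k) (T k)) (g (φ k) s) ≤ 3 * δ + R₀ δ K := by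
    intro k
    have h1 := (hgood k).1.2
    have h2 : dist b (v 0) + 3 * δ < T k := by
      show dist b (v 0) + 3 * δ < dist b (u 0) + dist b (v 0) + 3 * δ + 1 + (k:ℝ)
      have h3 : (0:ℝ) ≤ (k:ℝ) := Nat.cast_nonneg k
      linarith [dist_nonneg (x := b) (y := u 0)]
    exact geod_from_base_near_qgeod hδ hyp hgeo hK (hg (φ k)) (hτ (φ k)) (hT0 k) h1 h2
  choose p hp0 hpL hpd using hpk
  choose q hq0 hqL hqd using hqk
  refine ⟨φ, hφm, p, q, fun k => ⟨hp0 k, hpL k⟩, fun k => ⟨hq0 k, hqL k⟩, ?_, ?_, ?_⟩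
  · -- distance bound
    intro k
    show dist (γ (φ k) (p k)) (g (φ k) (q k)) ≤ 12 * δ + 2 * R₀ δ K + 2
    have h1 : dist (σ (φ k) (T k)) (ρ.1 (T k)) ≤ 1 := (hgood k).2.1 (T k) (hT0 k) le_rfl
    have h2 : dist (τ (φ k) (T k)) (ρ'.1 (T k)) ≤ 1 := (hgood k).2.2 (T k) (hT0 k) le_rfl
    have h3 := hρρ' (T k) (hT0 k)
    have t1 : dist (γ (φ k) (p k)) (g (φ k) (q k)) ≤
        dist (γ (φ k) (p k)) (σ (φ k) (T k)) + dist (σ (φ k) (T k)) (g (φ k) (q k)) :=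
      dist_triangle _ _ _
    have t2 : dist (σ (φ k) (T k)) (g (φ k) (q k)) ≤
        dist (σ (φ k) (T k)) (ρ.1 (T k)) + dist (ρ.1 (T k)) (g (φ k) (q k)) :=
      dist_triangle _ _ _
    have t3 : dist (ρ.1 (T k)) (g (φ k) (q k)) ≤
        dist (ρ.1 (T k)) (ρ'.1 (T k)) + dist (ρ'.1 (T k)) (g (φ k) (q k)) :=
      dist_triangle _ _ _
    have t4 : dist (ρ'.1 (T k)) (g (φ k) (q k)) ≤
        dist (ρ'.1 (T k)) (τ (φ k) (T k)) + dist (τ (φ k) (T k)) (g (φ k) (q k)) :=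
      dist_triangle _ _ _
    have e1 : dist (γ (φ k) (p k)) (σ (φ k) (T k)) = dist (σ (φ k) (T k)) (γ (φ k) (p k)) :=
      dist_comm _ _
    have e2 : dist (ρ'.1 (T k)) (τ (φ k) (T k)) = dist (τ (φ k) (T k)) (ρ'.1 (T k)) :=
      dist_comm _ _
    have b1 := hpd k
    have b2 := hqd k
    linarith
  · -- convergence of the p-points
    apply seqConvTo_of_near_ray hδ hyp hgeo ρ hρξ _ T hT0 hT
      (C₁ := 3 * δ + R₀ δ K + 1)
    intro k
    have h1 : dist (σ (φ k) (T k)) (ρ.1 (T k)) ≤ 1 := (hgood k).2.1 (T k) (hT0 k) le_rfl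
    have tri : dist (γ (φ k) (p k)) (ρ.1 (T k)) ≤
        dist (γ (φ k) (p k)) (σ (φ k) (T k)) + dist (σ (φ k) (T k)) (ρ.1 (T k)) :=
      dist_triangle _ _ _
    have e1 : dist (γ (φ k) (p k)) (σ (φ k) (T k)) = dist (σ (φ k) (T k)) (γ (φ k) (p k)) :=
      dist_comm _ _
    linarith [hpd k]
  · -- convergence of the q-points
    apply seqConvTo_of_near_ray hδ hyp hgeo ρ' hρ'ξ _ T hT0 hT
      (C₁ := 3 * δ + R₀ δ K + 1)
    intro k
    have h1 : dist (τ (φ k) (T k)) (ρ'.1 (T k)) ≤ 1 := (hgood k).2.2 (T k) (hT0 k) le_rfl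
    have tri : dist (g (φ k) (q k)) (ρ'.1 (T k)) ≤
        dist (g (φ k) (q k)) (τ (φ k) (T k)) + dist (τ (φ k) (T k)) (ρ'.1 (T k)) :=
      dist_triangle _ _ _
    have e1 : dist (g (φ k) (q k)) (τ (φ k) (T k)) = dist (τ (φ k) (T k)) (g (φ k) (q k)) :=
      dist_comm _ _
    linarith [hqd k]

end LIP
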